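/- Fix Seifert data satisfying the numerically Gorenstein congruence conditions (γ ∈ ℤ and ωᵢ·γ ≡ 1 (mod αᵢ) for every i), with γ ≥ 1, and assume additionally 𝔬 := α·|e| = 1. Then the largest integer ℓ with N(ℓ) ≤ −1 equals α + γ; i.e., N(α+γ) ≤ −1 and N(ℓ) ≥ 0 for every integer ℓ > α + γ. In other words, the Frobenius number of the semigroup 𝒮 = {ℓ ∈ ℤ : N(ℓ) ≥ 0} equals α + γ. -/

import Mathlib

-- ceiling upper bound: ⌈a/b⌉ ≤ a/b + 1 - 1/b for b > 0
lemma ceil_le_aux (a b : ℤ) (hb : 0 < b) :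
    (⌈(a:ℚ)/(b:ℚ)⌉ : ℚ) ≤ (a:ℚ)/(b:ℚ) + 1 - 1/(b:ℚ) := by
  have hb' : (0:ℚ) < (b:ℚ) := by exact_mod_cast hb
  have h1 : (⌈(a:ℚ)/(b:ℚ)⌉ : ℚ) < (a:ℚ)/(b:ℚ) + 1 := Int.ceil_lt_add_one _
  have h3 : ((a:ℚ)/b + 1) * b = (a:ℚ) + b := by field_simp
  have h2 : (⌈(a:ℚ)/(b:ℚ)⌉ : ℚ) * b < (a:ℚ) + b := by
    have := mul_lt_mul_of_pos_right h1 hb'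
    linarith
  have h4 : ⌈(a:ℚ)/(b:ℚ)⌉ * b ≤ a + b - 1 := by
    have : ⌈(a:ℚ)/(b:ℚ)⌉ * b < a + b := by exact_mod_cast h2
    omega
  have h5 : (⌈(a:ℚ)/(b:ℚ)⌉ : ℚ) ≤ ((a:ℚ) + b - 1)/b := by
    rw [le_div_iff₀ hb']
    exact_mod_cast h4
  have h6 : ((a:ℚ) + b - 1)/b = (a:ℚ)/b + 1 - 1/b := by field_simp
  linarith

-- exact ceiling when a ≡ 1 mod b
lemma ceil_eq_aux (a b : ℤ) (hb : 0 < b) (h : b ∣ a - 1) :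
    (⌈(a:ℚ)/(b:ℚ)⌉ : ℚ) = (a:ℚ)/(b:ℚ) + 1 - 1/(b:ℚ) := by
  have hb' : (0:ℚ) < (b:ℚ) := by exact_mod_cast hb
  obtain ⟨k, hk⟩ := h
  have ha : a = b * k + 1 := by omega
  subst ha
  have hx : ((b * k + 1 : ℤ) : ℚ)/(b:ℚ) = 1/(b:ℚ) + (k:ℚ) := by
    push_cast; field_simp; ring
  rw [hx]
  have hc : ⌈(1/(b:ℚ) + (k:ℚ))⌉ = 1 + k := by
    rw [Int.ceil_add_intCast]
    have h1 : ⌈(1/(b:ℚ))⌉ = 1 := by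
      rw [Int.ceil_eq_iff]
      constructor
      · have h0 : (0:ℚ) < 1/(b:ℚ) := by positivity
        push_cast; linarith
      · push_cast
        rw [div_le_one hb']
        exact_mod_cast hb
    rw [h1]
  rw [hc]
  push_cast
  field_simp
  ring

theorem stmt_3
    (d : ℕ) (hd : 3 ≤ d) (b₀ : ℤ)
    (α ω : Fin d → ℤ)
    (hω : ∀ i, 0 < ω i ∧ ω i < α i)
    (hcop : ∀ i, IsCoprime (α i) (ω i))
    (e : ℚ) (he : e = -(b₀ : ℚ) + ∑ i, (ω i : ℚ) / (α i : ℚ)) (heneg : e < 0)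
    (N : ℤ → ℤ)
    (hN : ∀ ℓ : ℤ, N ℓ = b₀ * ℓ - ∑ i, ⌈((ℓ * ω i : ℤ) : ℚ) / ((α i : ℤ) : ℚ)⌉)
    (γ : ℤ)
    (hγ : (γ : ℚ) = ((d : ℚ) - 2 - ∑ i, 1 / (α i : ℚ)) / |e|)
    (hGor : ∀ i, α i ∣ ω i * γ - 1)
    (hγ1 : 1 ≤ γ)
    (A : ℤ) (hA : A = Finset.univ.lcm α)
    (ho : (A : ℚ) * |e| = 1) :
    N (A + γ) ≤ -1 ∧ ∀ ℓ : ℤ, A + γ < ℓ → 0 ≤ N ℓ := by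
  have hαpos : ∀ i, 0 < α i := fun i => lt_trans (hω i).1 (hω i).2
  have hαQ : ∀ i, (0:ℚ) < (α i : ℚ) := fun i => by exact_mod_cast hαpos i
  have habs : |e| = -e := abs_of_neg heneg
  have heabs : 0 < |e| := abs_pos.mpr (ne_of_lt heneg)
  have hAQ : (0:ℚ) < (A:ℚ) := by nlinarith
  have hA0 : (A:ℚ) ≠ 0 := ne_of_gt hAQ
  set S1 : ℚ := ∑ i, (ω i : ℚ) / (α i : ℚ) with hS1
  set S2 : ℚ := ∑ i, 1 / (α i : ℚ) with hS2
  -- b₀ = S1 + 1/A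
  have hb₀ : (b₀:ℚ) = S1 + 1/(A:ℚ) := by
    have h1 : (A:ℚ) * ((b₀:ℚ) - S1) = 1 := by
      rw [habs, he] at ho; linarith [ho]
    field_simp at h1 ⊢
    linarith
  -- γ = A * (d - 2 - S2)
  have hγ' : (γ:ℚ) = (A:ℚ) * ((d:ℚ) - 2 - S2) := by
    have habs2 : |e| = 1/(A:ℚ) := by
      field_simp
      linarith [ho]
    rw [hγ, habs2]
    field_simp
  -- sum of upper bounds
  have hsum : ∀ ℓ : ℤ, ∑ i, ((ℓ:ℚ) * (ω i:ℚ) / (α i:ℚ) + 1 - 1/(α i:ℚ))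
      = (ℓ:ℚ) * S1 + (d:ℚ) - S2 := by
    intro ℓ
    rw [Finset.sum_sub_distrib, Finset.sum_add_distrib]
    simp [hS1, hS2, Finset.mul_sum, mul_div_assoc]
  have hS2' : S2 = (d:ℚ) - 2 - (γ:ℚ)/(A:ℚ) := by
    field_simp
    linarith [hγ']
  have hdvdA : ∀ i, α i ∣ A := fun i => hA ▸ Finset.dvd_lcm (Finset.mem_univ i)
  constructor
  · -- N(A+γ) = -1
    have hkey : ∀ i, (⌈(((A+γ) * ω i : ℤ) : ℚ) / ((α i : ℤ) : ℚ)⌉ : ℚ)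
        = ((A+γ:ℤ):ℚ) * (ω i:ℚ) / (α i:ℚ) + 1 - 1/(α i:ℚ) := by
      intro i
      have hdvd : α i ∣ (A+γ) * ω i - 1 := by
        have h1 : α i ∣ A * ω i := Dvd.dvd.mul_right (hdvdA i) _
        have h2 := hGor i
        have heq : (A+γ) * ω i - 1 = A * ω i + (ω i * γ - 1) := by ring
        rw [heq]; exact dvd_add h1 h2
      have := ceil_eq_aux ((A+γ) * ω i) (α i) (hαpos i) hdvd
      rw [this]; push_cast; ring
    push_cast at hkey
    have hs := hsum (A+γ)
    push_cast at hs
    have hNQ : ((N (A+γ) : ℤ) : ℚ) = -1 := by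
      rw [hN]
      push_cast
      rw [Finset.sum_congr rfl (fun i _ => hkey i), hs]
      rw [hb₀, hS2']
      field_simp
      ring
    have : N (A+γ) = -1 := by exact_mod_cast hNQ
    omega
  · intro ℓ hℓ
    have hle : ∑ i, (⌈((ℓ * ω i : ℤ) : ℚ) / ((α i : ℤ) : ℚ)⌉ : ℚ)
        ≤ ∑ i, ((ℓ:ℚ) * (ω i:ℚ) / (α i:ℚ) + 1 - 1/(α i:ℚ)) := by
      apply Finset.sum_le_sum
      intro i _
      have := ceil_le_aux (ℓ * ω i) (α i) (hαpos i)
      push_cast at this ⊢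
      linarith
    rw [hsum ℓ] at hle
    push_cast at hle
    have h2 : (b₀:ℚ) * ℓ - ((ℓ:ℚ) * S1 + (d:ℚ) - S2) = ((ℓ:ℚ) - γ)/(A:ℚ) - 2 := by
      rw [hb₀, hS2']
      field_simp
      ring
    have hℓ' : (A:ℚ) + 1 ≤ (ℓ:ℚ) - (γ:ℚ) := by
      have h : A + γ + 1 ≤ ℓ := hℓ
      have h' : ((A + γ + 1 : ℤ) : ℚ) ≤ (ℓ:ℚ) := by exact_mod_cast h
      push_cast at h'; linarith
    have h3 : ((A:ℚ) + 1)/(A:ℚ) ≤ ((ℓ:ℚ) - γ)/(A:ℚ) := by gcongr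
    have h4 : ((A:ℚ) + 1)/(A:ℚ) = 1 + 1/(A:ℚ) := by field_simp
    have h5 : (0:ℚ) < 1/(A:ℚ) := by positivity
    have hbound : (-1 : ℚ) < ((N ℓ : ℤ) : ℚ) := by
      rw [hN]
      push_cast
      linarith
    have : (-1 : ℤ) < N ℓ := by exact_mod_cast hbound
    omega
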